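/- Let k be a field and n ≥ 1. Let E denote the standard complete flag in k^n, with E_i spanned by the first i standard basis vectors, and let B ≤ GL_n(k) be the stabilizer of E (the invertible upper triangular matrices). Two complete flags F and F' in k^n lie in the same B-orbit if and only if dim(E_i ∩ F_j) = dim(E_i ∩ F'_j) for all 0 ≤ i, j ≤ n; consequently the B-orbits on the set of complete flags in k^n are in bijection with S_n. (Ehresmann's cell decomposition of the full flag manifold, reformulated via the Bruhat decomposition.) -/

import Mathlib

/-- A complete flag in `k^n`: a chain `0 = F 0 ⊆ F 1 ⊆ ⋯ ⊆ F n = k^n` of linear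
subspaces with `dim (F i) = i` for all `i`. -/
def IsCompleteFlag {k : Type*} [Field k] {n : ℕ}
    (F : Fin (n + 1) → Submodule k (Fin n → k)) : Prop :=
  Monotone F ∧ F 0 = ⊥ ∧ F (Fin.last n) = ⊤ ∧
    ∀ i : Fin (n + 1), Module.finrank k (F i) = (i : ℕ)

/-- The `i`-th member `E_i` of the standard complete flag of `k^n`: the span of the
first `i` standard basis vectors, i.e. the vectors vanishing in coordinates `≥ i`. -/
def stdFlag (k : Type*) [Field k] (n : ℕ) (i : Fin (n + 1)) : Submodule k (Fin n → k) where
  carrier := {v | ∀ a : Fin n, (i : ℕ) ≤ (a : ℕ) → v a = 0}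
  add_mem' := fun hu hv a ha => by simp [hu a ha, hv a ha]
  zero_mem' := fun a _ => rfl
  smul_mem' := fun c v hv a ha => by simp [hv a ha]

/-- A square matrix is upper triangular if all entries below the diagonal vanish. -/
def IsUpperTriangular {k : Type*} [Field k] {n : ℕ} (A : Matrix (Fin n) (Fin n) k) : Prop :=
  ∀ i j : Fin n, j < i → A i j = 0

/-- Two complete flags lie in the same orbit of `B`, the stabilizer of the standard
flag (the invertible upper triangular matrices). -/
def SameBOrbit {k : Type*} [Field k] {n : ℕ}
    (F F' : Fin (n + 1) → Submodule k (Fin n → k)) : Prop :=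
  ∃ g : GL (Fin n) k, IsUpperTriangular (g : Matrix (Fin n) (Fin n) k) ∧
    ∀ j : Fin (n + 1),
      (F j).map (Matrix.mulVecLin (g : Matrix (Fin n) (Fin n) k)) = F' j

/-- The type of complete flags in `k^n`. -/
def CompleteFlag (k : Type*) [Field k] (n : ℕ) : Type _ :=
  {F : Fin (n + 1) → Submodule k (Fin n → k) // IsCompleteFlag F}

section Coord
variable (k : Type*) [Field k] {n : ℕ}

/-- coordinate subspace given by a predicate -/
def coordSub (p : Fin n → Prop) : Submodule k (Fin n → k) where
  carrier := {v | ∀ a : Fin n, ¬ p a → v a = 0}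
  add_mem' := fun hu hv a ha => by simp [hu a ha, hv a ha]
  zero_mem' := fun a _ => rfl
  smul_mem' := fun c v hv a ha => by simp [hv a ha]

variable {k}

lemma mem_coordSub {p : Fin n → Prop} {v : Fin n → k} :
    v ∈ coordSub k p ↔ ∀ a : Fin n, ¬ p a → v a = 0 := Iff.rfl

lemma coordSub_inf (p q : Fin n → Prop) :
    coordSub k p ⊓ coordSub k q = coordSub k (fun a => p a ∧ q a) := by
  ext v
  simp only [Submodule.mem_inf, mem_coordSub]
  constructor
  · rintro ⟨h1, h2⟩ a ha
    by_cases hp : p a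
    · exact h2 a (fun hq => ha ⟨hp, hq⟩)
    · exact h1 a hp
  · intro h
    exact ⟨fun a ha => h a (fun h' => ha h'.1), fun a ha => h a (fun h' => ha h'.2)⟩

noncomputable def coordSubEquiv (p : Fin n → Prop) [DecidablePred p] :
    (coordSub k p) ≃ₗ[k] ({a : Fin n // p a} → k) where
  toFun v := fun a => v.1 a.1
  map_add' u v := rfl
  map_smul' c v := rfl
  invFun f := ⟨fun a => if h : p a then f ⟨a, h⟩ else 0, fun a ha => by simp [ha]⟩
  left_inv v := by
    ext a
    by_cases h : p a <;> simp [h]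
    exact (v.2 a h).symm
  right_inv f := by ext a; simp [a.2]

lemma finrank_coordSub (p : Fin n → Prop) [DecidablePred p] :
    Module.finrank k (coordSub k p) = Fintype.card {a : Fin n // p a} := by
  rw [(coordSubEquiv p).finrank_eq, Module.finrank_fintype_fun_eq_card]

lemma stdFlag_eq_coordSub (i : Fin (n + 1)) :
    stdFlag k n i = coordSub k (fun a => (a : ℕ) < (i : ℕ)) := by
  ext v
  simp only [mem_coordSub, not_lt]
  exact Iff.rfl

lemma stdFlag_last : stdFlag k n (Fin.last n) = ⊤ := by
  ext v
  simp only [Submodule.mem_top, iff_true]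
  intro a ha
  exact absurd ha (by simp [Fin.val_last, a.2.not_ge])

/-- The coordinate flag associated to a permutation `w`: `j`-th member is spanned by
`e_{w 0}, …, e_{w (j-1)}`. -/
def coordFlag (w : Equiv.Perm (Fin n)) (j : Fin (n + 1)) : Submodule k (Fin n → k) :=
  coordSub k (fun a => ((w.symm a : Fin n) : ℕ) < (j : ℕ))

lemma mem_coordFlag {w : Equiv.Perm (Fin n)} {j : Fin (n + 1)} {v : Fin n → k} :
    v ∈ (coordFlag w j : Submodule k (Fin n → k)) ↔
      ∀ a : Fin n, ¬ ((w.symm a : ℕ) < (j : ℕ)) → v a = 0 := Iff.rfl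

lemma coordFlag_eq_span (w : Equiv.Perm (Fin n)) (j : Fin (n + 1)) :
    (coordFlag w j : Submodule k (Fin n → k)) =
      Submodule.span k ((fun l : Fin n => (Pi.single (w l) 1 : Fin n → k)) ''
        {l : Fin n | (l : ℕ) < (j : ℕ)}) := by
  apply le_antisymm
  · intro v hv
    classical
    have : v = ∑ a : Fin n, v a • (Pi.single a 1 : Fin n → k) := by
      ext b
      simp [Finset.sum_apply, Pi.single_apply]
    rw [this]
    apply Submodule.sum_mem
    intro a _
    by_cases h : v a = 0
    · simp [h]
    · apply Submodule.smul_mem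
      apply Submodule.subset_span
      refine ⟨w.symm a, ?_, by simp⟩
      by_contra hc
      exact h (hv a hc)
  · rw [Submodule.span_le]
    rintro x ⟨l, hl, rfl⟩
    intro a ha
    simp only at ha
    show (Pi.single (w l) 1 : Fin n → k) a = 0
    rw [Pi.single_apply, if_neg]
    rintro rfl
    simp at ha
    exact absurd hl (by simpa using ha)

end Coord

section Count
variable {k : Type*} [Field k] {n : ℕ}

/-- the rank matrix of a permutation -/
def pcount (w : Equiv.Perm (Fin n)) (i j : Fin (n + 1)) : ℕ :=
  Fintype.card {l : Fin n // (l : ℕ) < (j : ℕ) ∧ ((w l : Fin n) : ℕ) < (i : ℕ)}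

lemma finrank_stdFlag_inf_coordFlag (w : Equiv.Perm (Fin n)) (i j : Fin (n + 1)) :
    Module.finrank k (stdFlag k n i ⊓ coordFlag w j : Submodule k (Fin n → k)) =
      pcount w i j := by
  rw [stdFlag_eq_coordSub]
  show Module.finrank k (coordSub k _ ⊓ coordSub k _ : Submodule k (Fin n → k)) = _
  rw [coordSub_inf, finrank_coordSub]
  refine Fintype.card_congr
    ⟨fun a => ⟨w.symm a.1, a.2.2, by simpa using a.2.1⟩,
     fun l => ⟨w l.1, by simpa using l.2.2, by simpa using l.2.1⟩,
     fun a => Subtype.ext (by simp), fun l => Subtype.ext (by simp)⟩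

lemma card_lt_fin (m : ℕ) (hm : m ≤ n) :
    Fintype.card {l : Fin n // (l : ℕ) < m} = m := by
  rw [show m = Fintype.card (Fin m) by simp]
  refine Fintype.card_congr ⟨fun l => ⟨l.1.1, by simpa using l.2⟩,
    fun l => ⟨⟨l.1, lt_of_lt_of_le l.2 hm⟩, by simpa using l.2⟩, ?_, ?_⟩ <;> intro x <;> rfl

lemma pcount_eq_self (w : Equiv.Perm (Fin n)) (j : Fin (n + 1)) :
    pcount w (Fin.last n) j = (j : ℕ) := by
  unfold pcount
  have h : ∀ l : Fin n, ((l : ℕ) < (j : ℕ) ∧ ((w l : Fin n) : ℕ) < ((Fin.last n : Fin (n+1)) : ℕ)) ↔ (l : ℕ) < (j : ℕ) := by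
    intro l; simp [Fin.val_last, (w l).2]
  rw [Fintype.card_congr (Equiv.subtypeEquivRight h)]
  exact card_lt_fin _ (Nat.lt_succ_iff.mp j.2)

lemma coordFlag_isCompleteFlag (w : Equiv.Perm (Fin n)) :
    IsCompleteFlag (fun j => (coordFlag w j : Submodule k (Fin n → k))) := by
  refine ⟨?_, ?_, ?_, ?_⟩
  · intro a b hab v hv
    intro c hc
    exact hv c (fun h => hc (lt_of_lt_of_le h hab))
  · ext v
    simp only [Submodule.mem_bot, mem_coordFlag]
    constructor
    · intro h; ext a; exact h a (by simp)
    · rintro rfl a _; rfl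
  · ext v
    simp only [Submodule.mem_top, iff_true, mem_coordFlag]
    intro a ha
    exact absurd ha (by simp [Fin.val_last, (w.symm a).2])
  · intro j
    have := finrank_stdFlag_inf_coordFlag (k := k) w (Fin.last n) j
    rw [stdFlag_last, top_inf_eq, pcount_eq_self] at this
    exact this

lemma pcount_succ (w : Equiv.Perm (Fin n)) (i : Fin (n + 1)) (l : Fin n) :
    pcount w i l.succ = pcount w i l.castSucc + (if ((w l : Fin n) : ℕ) < (i : ℕ) then 1 else 0) := by
  classical
  unfold pcount
  rw [Fintype.card_subtype, Fintype.card_subtype]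
  rw [show (Finset.filter (fun x : Fin n => (x : ℕ) < (l.succ : ℕ) ∧ ((w x : Fin n) : ℕ) < (i : ℕ)) Finset.univ)
      = (Finset.filter (fun x : Fin n => (x : ℕ) < (l.castSucc : ℕ) ∧ ((w x : Fin n) : ℕ) < (i : ℕ)) Finset.univ)
        ∪ (if ((w l : Fin n) : ℕ) < (i : ℕ) then {l} else ∅) from ?_]
  · rw [Finset.card_union_of_disjoint]
    · congr 1
      split <;> simp
    · split
      · simp only [Finset.disjoint_singleton_right, Finset.mem_filter]
        rintro ⟨-, h, -⟩
        simp at h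
      · simp
  · ext x
    simp only [Finset.mem_filter, Finset.mem_union, Finset.mem_univ, true_and]
    rcases eq_or_ne x l with rfl | hx
    · simp only [Fin.val_succ, Fin.coe_castSucc]
      split <;> simp_all <;> omega
    · have : (x : ℕ) ≠ (l : ℕ) := fun h => hx (Fin.ext h)
      simp only [Fin.val_succ, Fin.coe_castSucc]
      constructor
      · rintro ⟨h1, h2⟩; exact Or.inl ⟨by omega, h2⟩
      · intro h
        rcases h with ⟨h1, h2⟩ | h
        · exact ⟨by omega, h2⟩
        · split at h <;> simp_all

lemma pcount_injective {w w' : Equiv.Perm (Fin n)}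
    (h : ∀ i j : Fin (n + 1), pcount w i j = pcount w' i j) : w = w' := by
  ext l
  show ((w l : Fin n) : ℕ) = ((w' l : Fin n) : ℕ)
  have key : ∀ i : Fin (n + 1), (((w l : Fin n) : ℕ) < (i : ℕ)) ↔ (((w' l : Fin n) : ℕ) < (i : ℕ)) := by
    intro i
    have h1 := pcount_succ w i l
    have h2 := pcount_succ w' i l
    rw [h i l.succ, h i l.castSucc] at h1
    rw [h1] at h2
    have := Nat.add_left_cancel h2.symm
    split at this <;> split at this <;> first | tauto | simp_all
  have h1 := key ((w l : Fin n).succ)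
  have h2 := key ((w' l : Fin n).succ)
  simp only [Fin.val_succ] at h1 h2
  omega

end Count

section UT
variable {k : Type*} [Field k] {n : ℕ}

lemma isUpperTriangular_iff_blockTriangular {A : Matrix (Fin n) (Fin n) k} :
    IsUpperTriangular A ↔ A.BlockTriangular id := Iff.rfl

lemma IsUpperTriangular.mul {A B : Matrix (Fin n) (Fin n) k}
    (hA : IsUpperTriangular A) (hB : IsUpperTriangular B) : IsUpperTriangular (A * B) :=
  Matrix.BlockTriangular.mul hA hB

lemma IsUpperTriangular.inv (g : GL (Fin n) k)
    (hg : IsUpperTriangular (g : Matrix (Fin n) (Fin n) k)) :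
    IsUpperTriangular ((g⁻¹ : GL (Fin n) k) : Matrix (Fin n) (Fin n) k) := by
  haveI := g.invertible
  rw [show ((g⁻¹ : GL (Fin n) k) : Matrix (Fin n) (Fin n) k)
      = (g : Matrix (Fin n) (Fin n) k)⁻¹ from Matrix.coe_units_inv g]
  exact Matrix.blockTriangular_inv_of_blockTriangular hg

lemma mulVecLin_gl_bijective (g : GL (Fin n) k) :
    Function.Bijective (Matrix.mulVecLin (g : Matrix (Fin n) (Fin n) k)) := by
  constructor
  · have h : (((g⁻¹ : GL (Fin n) k) : Matrix (Fin n) (Fin n) k)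
        * (g : Matrix (Fin n) (Fin n) k)) = 1 := by
      rw [← Matrix.GeneralLinearGroup.coe_mul, inv_mul_cancel g,
        Matrix.GeneralLinearGroup.coe_one]
    intro x y hxy
    have h2 := congrArg (Matrix.mulVecLin ((g⁻¹ : GL (Fin n) k) : Matrix (Fin n) (Fin n) k)) hxy
    rw [← LinearMap.comp_apply, ← LinearMap.comp_apply, ← Matrix.mulVecLin_mul, h] at h2
    simpa using h2
  · intro y
    refine ⟨Matrix.mulVecLin ((g⁻¹ : GL (Fin n) k) : Matrix (Fin n) (Fin n) k) y, ?_⟩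
    have h : ((g : Matrix (Fin n) (Fin n) k)
        * ((g⁻¹ : GL (Fin n) k) : Matrix (Fin n) (Fin n) k)) = 1 := by
      rw [← Matrix.GeneralLinearGroup.coe_mul, mul_inv_cancel g,
        Matrix.GeneralLinearGroup.coe_one]
    rw [← LinearMap.comp_apply, ← Matrix.mulVecLin_mul, h]
    simp

lemma stdFlag_map (g : GL (Fin n) k)
    (hg : IsUpperTriangular (g : Matrix (Fin n) (Fin n) k)) (i : Fin (n + 1)) :
    (stdFlag k n i).map (Matrix.mulVecLin (g : Matrix (Fin n) (Fin n) k)) = stdFlag k n i := by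
  have hle : (stdFlag k n i).map (Matrix.mulVecLin (g : Matrix (Fin n) (Fin n) k))
      ≤ stdFlag k n i := by
    rintro x ⟨v, hv, rfl⟩
    intro a ha
    show ∑ b, (g : Matrix (Fin n) (Fin n) k) a b * v b = 0
    apply Finset.sum_eq_zero
    intro b _
    by_cases hb : (i : ℕ) ≤ (b : ℕ)
    · rw [hv b hb, mul_zero]
    · rw [hg a b (by omega), zero_mul]
  refine Submodule.eq_of_le_of_finrank_eq hle ?_
  rw [← LinearEquiv.finrank_eq
    (Submodule.equivMapOfInjective _ (mulVecLin_gl_bijective g).1 (stdFlag k n i))]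

lemma sameBOrbit_dim (g : GL (Fin n) k)
    (hg : IsUpperTriangular (g : Matrix (Fin n) (Fin n) k))
    (F F' : Fin (n + 1) → Submodule k (Fin n → k))
    (hFF : ∀ j, (F j).map (Matrix.mulVecLin (g : Matrix (Fin n) (Fin n) k)) = F' j)
    (i j : Fin (n + 1)) :
    Module.finrank k (stdFlag k n i ⊓ F j : Submodule k (Fin n → k)) =
      Module.finrank k (stdFlag k n i ⊓ F' j : Submodule k (Fin n → k)) := by
  have key : stdFlag k n i ⊓ F' j
      = (stdFlag k n i ⊓ F j).map (Matrix.mulVecLin (g : Matrix (Fin n) (Fin n) k)) := by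
    rw [Submodule.map_inf _ (mulVecLin_gl_bijective g).1, stdFlag_map g hg i, hFF j]
  rw [key]
  exact (LinearEquiv.finrank_eq
    (Submodule.equivMapOfInjective _ (mulVecLin_gl_bijective g).1 _))

lemma sameBOrbit_refl (F : Fin (n + 1) → Submodule k (Fin n → k)) : SameBOrbit F F := by
  refine ⟨1, fun i j h => ?_, fun j => ?_⟩
  · rw [Matrix.GeneralLinearGroup.coe_one]
    exact Matrix.one_apply_ne (ne_of_gt h)
  · rw [Matrix.GeneralLinearGroup.coe_one, Matrix.mulVecLin_one, Submodule.map_id]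

lemma sameBOrbit_symm {F F' : Fin (n + 1) → Submodule k (Fin n → k)}
    (h : SameBOrbit F F') : SameBOrbit F' F := by
  obtain ⟨g, hg, hFF⟩ := h
  refine ⟨g⁻¹, IsUpperTriangular.inv g hg, fun j => ?_⟩
  rw [← hFF j, ← Submodule.map_comp, ← Matrix.mulVecLin_mul,
    ← Matrix.GeneralLinearGroup.coe_mul, inv_mul_cancel g,
    Matrix.GeneralLinearGroup.coe_one, Matrix.mulVecLin_one, Submodule.map_id]

lemma sameBOrbit_trans {F F' F'' : Fin (n + 1) → Submodule k (Fin n → k)}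
    (h : SameBOrbit F F') (h' : SameBOrbit F' F'') : SameBOrbit F F'' := by
  obtain ⟨g, hg, hFF⟩ := h
  obtain ⟨g', hg', hFF'⟩ := h'
  refine ⟨g' * g, ?_, fun j => ?_⟩
  · rw [Matrix.GeneralLinearGroup.coe_mul]
    exact IsUpperTriangular.mul hg' hg
  · rw [Matrix.GeneralLinearGroup.coe_mul, Matrix.mulVecLin_mul, Submodule.map_comp,
      hFF j, hFF' j]

end UT

section Pivot
variable {k : Type*} [Field k] {n : ℕ}

lemma exists_pivot {F : Fin (n + 1) → Submodule k (Fin n → k)} (hF : IsCompleteFlag F)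
    (j : Fin n) :
    ∃ (a : Fin n) (u : Fin n → k), u ∈ F j.succ ∧ u ∉ F j.castSucc ∧
      u ∈ stdFlag k n a.succ ∧ u a ≠ 0 ∧
      ∀ x ∈ F j.succ, x ∈ stdFlag k n a.castSucc → x ∈ F j.castSucc := by
  classical
  obtain ⟨hmono, h0, htop, hrank⟩ := hF
  set P : Fin (n + 1) → Prop :=
    fun i => ∃ x, x ∈ F j.succ ∧ x ∈ stdFlag k n i ∧ x ∉ F j.castSucc with hP
  have hlt : F j.castSucc < F j.succ := by
    refine lt_of_le_of_ne (hmono (Fin.castSucc_le_succ j)) (fun he => ?_)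
    have h1 := hrank j.castSucc
    rw [he, hrank j.succ] at h1
    simp [Fin.val_succ, Fin.coe_castSucc] at h1
  have hPlast : P (Fin.last n) := by
    obtain ⟨x, hx1, hx2⟩ := SetLike.exists_of_lt hlt
    exact ⟨x, hx1, by rw [stdFlag_last]; trivial, hx2⟩
  set s := Finset.univ.filter P with hs
  have hsne : s.Nonempty := ⟨Fin.last n, by simp [hs, hPlast]⟩
  set i := s.min' hsne with hi
  have hPi : P i := (Finset.mem_filter.mp (s.min'_mem hsne)).2
  have hmin : ∀ i' : Fin (n + 1), i' < i → ¬ P i' := by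
    intro i' hi' hPi'
    exact absurd (s.min'_le i' (by simp [hs, hPi'])) (not_le.mpr hi')
  have hi0 : (0 : ℕ) < (i : ℕ) := by
    rcases Nat.eq_zero_or_pos (i : ℕ) with h | h
    · exfalso
      obtain ⟨x, hx1, hx2, hx3⟩ := hPi
      have hx0 : x = 0 := by
        ext b
        exact hx2 b (by omega)
      exact hx3 (hx0 ▸ (F j.castSucc).zero_mem)
    · exact h
  have hn0 : 0 < n := lt_of_le_of_lt (Nat.zero_le _) j.2
  have hin : (i : ℕ) < n + 1 := i.2
  obtain ⟨x, hx1, hx2, hx3⟩ := hPi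
  set a : Fin n := ⟨(i : ℕ) - 1, by omega⟩ with ha
  have hasucc : (a.succ : Fin (n + 1)) = i := by
    apply Fin.ext
    simp [Fin.val_succ, ha]
    omega
  have hmin' : ∀ x ∈ F j.succ, x ∈ stdFlag k n a.castSucc → x ∈ F j.castSucc := by
    intro y hy1 hy2
    by_contra hy3
    refine hmin a.castSucc ?_ ⟨y, hy1, hy2, hy3⟩
    rw [Fin.lt_def]
    rw [Fin.coe_castSucc]; show (i : ℕ) - 1 < (i : ℕ)
    omega
  have hxa : x a ≠ 0 := by
    intro hxa0
    refine hx3 (hmin' x hx1 ?_)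
    intro b hb
    rcases eq_or_lt_of_le hb with h | h
    · have : b = a := Fin.ext h.symm
      rw [this]; exact hxa0
    · refine hx2 b ?_
      simp only [Fin.coe_castSucc, ha] at h ⊢
      omega
  exact ⟨a, x, hx1, hx3, hasucc ▸ hx2, hxa, hmin'⟩

end Pivot

section Echelon
variable {k : Type*} [Field k] {n : ℕ}

lemma flag_echelon {F : Fin (n + 1) → Submodule k (Fin n → k)} (hF : IsCompleteFlag F) :
    ∃ (w : Equiv.Perm (Fin n)) (g : GL (Fin n) k),
      IsUpperTriangular (g : Matrix (Fin n) (Fin n) k) ∧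
      ∀ j : Fin (n + 1),
        (coordFlag w j : Submodule k (Fin n → k)).map
          (Matrix.mulVecLin (g : Matrix (Fin n) (Fin n) k)) = F j := by
  classical
  obtain ⟨hmono, h0, htop, hrank⟩ := hF
  have hF' : IsCompleteFlag F := ⟨hmono, h0, htop, hrank⟩
  choose a u hu1 hu2 hu3 hu4 hu5 using (fun j => exists_pivot hF' j)
  -- injectivity of the pivot function
  have haux : ∀ j1 j2 : Fin n, j1 < j2 → a j1 ≠ a j2 := by
    intro j1 j2 h he
    have hle12 : F j1.succ ≤ F j2.castSucc := by
      apply hmono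
      rw [Fin.le_def]
      simp only [Fin.val_succ, Fin.coe_castSucc]
      exact h
    set lam : k := u j2 (a j2) / u j1 (a j1) with hlam
    set c : Fin n → k := u j2 - lam • u j1 with hc
    have hc1 : c ∈ F j2.succ :=
      sub_mem (hu1 j2) (Submodule.smul_mem _ _
        ((hmono (Fin.castSucc_le_succ j2)) (hle12 (hu1 j1))))
    have hcE : c ∈ stdFlag k n (a j2).castSucc := by
      intro b hb
      simp only [Fin.coe_castSucc] at hb
      show u j2 b - lam * u j1 b = 0
      rcases eq_or_lt_of_le hb with hba | hba
      · have hbeq : b = a j2 := Fin.ext hba.symm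
        subst hbeq
        rw [hlam, ← he, div_mul_cancel₀ _ (hu4 j1), sub_self]
      · rw [hu3 j2 b (by simp [Fin.val_succ]; omega),
          hu3 j1 b (by simp [Fin.val_succ, he]; omega)]
        ring
    have hcF : c ∈ F j2.castSucc := hu5 j2 c hc1 hcE
    apply hu2 j2
    have hu2eq : u j2 = c + lam • u j1 := by
      rw [hc]; ring_nf
    rw [hu2eq]
    exact add_mem hcF (Submodule.smul_mem _ _ (hle12 (hu1 j1)))
  have hainj : Function.Injective a := by
    intro j1 j2 he
    by_contra hne
    rcases lt_or_gt_of_ne hne with h | h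
    · exact haux j1 j2 h he
    · exact haux j2 j1 h he.symm
  let w : Equiv.Perm (Fin n) :=
    Equiv.ofBijective a (Finite.injective_iff_bijective.mp hainj)
  have hw : ∀ l, w l = a l := fun l => rfl
  -- span formula
  have hstep : ∀ p : Fin n, F p.succ = F p.castSucc ⊔ Submodule.span k {u p} := by
    intro p
    have hle : F p.castSucc ⊔ Submodule.span k {u p} ≤ F p.succ := by
      refine sup_le (hmono (Fin.castSucc_le_succ p)) ?_
      rw [Submodule.span_le, Set.singleton_subset_iff]
      exact hu1 p
    have hlt2 : F p.castSucc < F p.castSucc ⊔ Submodule.span k {u p} := by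
      refine lt_of_le_of_ne le_sup_left (fun heq => hu2 p ?_)
      rw [heq]
      exact Submodule.mem_sup_right (Submodule.mem_span_singleton_self (u p))
    have h1 : Module.finrank k (F p.castSucc) <
        Module.finrank k (F p.castSucc ⊔ Submodule.span k {u p} : Submodule k (Fin n → k)) :=
      Submodule.finrank_lt_finrank_of_lt hlt2
    have h2 : Module.finrank k (F p.castSucc ⊔ Submodule.span k {u p} : Submodule k (Fin n → k))
        ≤ Module.finrank k (F p.succ) := Submodule.finrank_mono hle
    have r1 := hrank p.castSucc
    have r2 := hrank p.succ
    simp only [Fin.coe_castSucc, Fin.val_succ] at r1 r2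
    exact (Submodule.eq_of_le_of_finrank_eq hle (by omega)).symm
  have hspan : ∀ i : Fin (n + 1),
      F i = Submodule.span k (u '' {l : Fin n | (l : ℕ) < (i : ℕ)}) := by
    intro i
    induction i using Fin.induction with
    | zero =>
      rw [h0, show {l : Fin n | (l : ℕ) < ((0 : Fin (n+1)) : ℕ)} = (∅ : Set (Fin n)) from by
        ext l; simp]
      simp [Submodule.span_empty]
    | succ p ih =>
      rw [hstep p, ih,
        show {l : Fin n | (l : ℕ) < (p.succ : ℕ)}
            = {l : Fin n | (l : ℕ) < (p.castSucc : ℕ)} ∪ {p} from by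
          ext l
          simp only [Set.mem_union, Set.mem_setOf_eq, Set.mem_singleton_iff,
            Fin.val_succ, Fin.coe_castSucc, Fin.ext_iff]
          omega]
      rw [Set.image_union, Submodule.span_union, Set.image_singleton]
  -- the basis and the matrix
  have hrange : Set.range (u ∘ ⇑w.symm) = Set.range u := by
    rw [Set.range_comp, Equiv.range_eq_univ, Set.image_univ]
  have htople : ⊤ ≤ Submodule.span k (Set.range (u ∘ ⇑w.symm)) := by
    rw [hrange, ← htop, hspan (Fin.last n),
      show {l : Fin n | (l : ℕ) < ((Fin.last n : Fin (n+1)) : ℕ)} = Set.univ from by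
        ext l; simp [Fin.val_last, l.2]]
    rw [Set.image_univ]
  have hcard : Fintype.card (Fin n) = Module.finrank k (Fin n → k) := by
    rw [Module.finrank_fintype_fun_eq_card]
  let b : Module.Basis (Fin n) k (Fin n → k) := basisOfTopLeSpanOfCardEqFinrank (u ∘ ⇑w.symm) htople hcard
  have hb : ⇑b = u ∘ ⇑w.symm := coe_basisOfTopLeSpanOfCardEqFinrank _ _ _
  set M : Matrix (Fin n) (Fin n) k := (Pi.basisFun k (Fin n)).toMatrix ⇑b with hM
  haveI : Invertible M := (Pi.basisFun k (Fin n)).invertibleToMatrix b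
  have hMentry : ∀ p c : Fin n, M p c = u (w.symm c) p := by
    intro p c
    rw [hM, Module.Basis.toMatrix_apply, Pi.basisFun_repr, hb]
    rfl
  refine ⟨w, ⟨M, ⅟M, mul_invOf_self M, invOf_mul_self M⟩, ?_, ?_⟩
  · intro p q hqp
    show M p q = 0
    rw [hMentry p q]
    refine hu3 (w.symm q) p ?_
    have : a (w.symm q) = q := w.apply_symm_apply q
    simp only [Fin.val_succ, this]
    omega
  · intro j
    show (coordFlag w j : Submodule k (Fin n → k)).map (Matrix.mulVecLin M) = F j
    rw [coordFlag_eq_span, Submodule.map_span, hspan j, ← Set.image_comp]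
    congr 1
    apply Set.image_congr
    intro l _
    show Matrix.mulVecLin M (Pi.single (w l) 1) = u l
    rw [Matrix.mulVecLin_apply, Matrix.mulVec_single]
    funext p
    show M p (w l) * 1 = u l p
    rw [hMentry p (w l), mul_one, w.symm_apply_apply]

end Echelon

section Final
variable {k : Type*} [Field k] {n : ℕ}

lemma flag_pcount {F : Fin (n + 1) → Submodule k (Fin n → k)} (hF : IsCompleteFlag F) :
    ∃ w : Equiv.Perm (Fin n), ∀ i j : Fin (n + 1),
      Module.finrank k (stdFlag k n i ⊓ F j : Submodule k (Fin n → k)) = pcount w i j := by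
  obtain ⟨w, g, hg, hmap⟩ := flag_echelon hF
  refine ⟨w, fun i j => ?_⟩
  rw [← sameBOrbit_dim g hg (fun j => coordFlag w j) F hmap i j,
    finrank_stdFlag_inf_coordFlag]

lemma main_iff (F F' : Fin (n + 1) → Submodule k (Fin n → k))
    (hF : IsCompleteFlag F) (hF' : IsCompleteFlag F') :
    SameBOrbit F F' ↔ ∀ i j : Fin (n + 1),
      Module.finrank k (stdFlag k n i ⊓ F j : Submodule k (Fin n → k)) =
        Module.finrank k (stdFlag k n i ⊓ F' j : Submodule k (Fin n → k)) := by
  constructor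
  · rintro ⟨g, hg, hmap⟩ i j
    exact sameBOrbit_dim g hg F F' hmap i j
  · intro h
    obtain ⟨w, g, hg, hmap⟩ := flag_echelon hF
    obtain ⟨w', g', hg', hmap'⟩ := flag_echelon hF'
    have hww : w = w' := by
      apply pcount_injective
      intro i j
      rw [← finrank_stdFlag_inf_coordFlag (k := k) w i j,
        sameBOrbit_dim g hg (fun j => coordFlag w j) F hmap i j, h i j,
        ← sameBOrbit_dim g' hg' (fun j => coordFlag w' j) F' hmap' i j,
        finrank_stdFlag_inf_coordFlag]
    exact sameBOrbit_trans (sameBOrbit_symm ⟨g, hg, hmap⟩) (hww ▸ ⟨g', hg', hmap'⟩)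

noncomputable def phi (F : CompleteFlag k n) : Equiv.Perm (Fin n) :=
  Classical.choose (flag_pcount F.2)

lemma phi_spec (F : CompleteFlag k n) : ∀ i j : Fin (n + 1),
    Module.finrank k (stdFlag k n i ⊓ F.1 j : Submodule k (Fin n → k)) = pcount (phi F) i j :=
  Classical.choose_spec (flag_pcount F.2)

lemma phi_eq_iff (F F' : CompleteFlag k n) : phi F = phi F' ↔ SameBOrbit F.1 F'.1 := by
  constructor
  · intro h
    refine (main_iff F.1 F'.1 F.2 F'.2).mpr (fun i j => ?_)
    rw [phi_spec F i j, h, phi_spec F' i j]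
  · intro h
    apply pcount_injective
    intro i j
    rw [← phi_spec F i j, (main_iff F.1 F'.1 F.2 F'.2).mp h i j, phi_spec F' i j]

lemma phi_coord (w : Equiv.Perm (Fin n)) :
    phi (⟨fun j => coordFlag w j, coordFlag_isCompleteFlag w⟩ : CompleteFlag k n) = w := by
  set C : CompleteFlag k n := ⟨fun j => coordFlag w j, coordFlag_isCompleteFlag w⟩
  apply pcount_injective
  intro i j
  rw [← phi_spec C i j]
  exact finrank_stdFlag_inf_coordFlag w i j

lemma phi_surjective : Function.Surjective (phi : CompleteFlag k n → Equiv.Perm (Fin n)) :=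
  fun w => ⟨⟨fun j => coordFlag w j, coordFlag_isCompleteFlag w⟩, phi_coord w⟩

lemma card_orbits :
    Nat.card {S : Set (CompleteFlag k n) |
      ∃ F : CompleteFlag k n, S = {F' | SameBOrbit F.1 F'.1}} = Nat.factorial n := by
  classical
  set O := {S : Set (CompleteFlag k n) | ∃ F : CompleteFlag k n, S = {F' | SameBOrbit F.1 F'.1}}
    with hO
  have horb : ∀ (F F' : CompleteFlag k n), SameBOrbit F.1 F'.1 →
      {X : CompleteFlag k n | SameBOrbit F.1 X.1} = {X | SameBOrbit F'.1 X.1} := by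
    intro F F' h
    ext X
    exact ⟨fun hX => sameBOrbit_trans (sameBOrbit_symm h) hX,
      fun hX => sameBOrbit_trans h hX⟩
  let psi : O → Equiv.Perm (Fin n) := fun S => phi (Classical.choose S.2)
  have hbij : Function.Bijective psi := by
    constructor
    · rintro S S' h
      have hs := Classical.choose_spec S.2
      have hs' := Classical.choose_spec S'.2
      apply Subtype.ext
      rw [hs, hs']
      exact horb _ _ ((phi_eq_iff _ _).mp h)
    · intro w
      set C : CompleteFlag k n := ⟨fun j => coordFlag w j, coordFlag_isCompleteFlag w⟩
      refine ⟨⟨{F' | SameBOrbit C.1 F'.1}, ⟨C, rfl⟩⟩, ?_⟩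
      show phi (Classical.choose _) = w
      set S : O := ⟨{F' | SameBOrbit C.1 F'.1}, ⟨C, rfl⟩⟩
      have hs := Classical.choose_spec S.2
      have hC : C ∈ S.1 := sameBOrbit_refl C.1
      rw [hs] at hC
      rw [(phi_eq_iff (Classical.choose S.2) C).mpr hC, phi_coord]
  rw [Nat.card_eq_of_bijective psi hbij, Nat.card_eq_fintype_card, Fintype.card_perm,
    Fintype.card_fin]

end Final

/-- Ehresmann's cell decomposition of the full flag manifold via the Bruhat
decomposition: two complete flags `F, F'` are in the same `B`-orbit iff
`dim (E_i ∩ F_j) = dim (E_i ∩ F'_j)` for all `i, j`, where `E` is the standard flag;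
consequently the `B`-orbits on complete flags are in bijection with `S_n`. -/
theorem ehresmann_cells_of_flag_manifold {k : Type*} [Field k] {n : ℕ} (hn : 1 ≤ n) :
    (∀ F F' : Fin (n + 1) → Submodule k (Fin n → k),
      IsCompleteFlag F → IsCompleteFlag F' →
      (SameBOrbit F F' ↔
        ∀ i j : Fin (n + 1),
          Module.finrank k ↥(stdFlag k n i ⊓ F j) =
            Module.finrank k ↥(stdFlag k n i ⊓ F' j))) ∧
    (∃ φ : CompleteFlag k n → Equiv.Perm (Fin n),
      Function.Surjective φ ∧
      ∀ F F' : CompleteFlag k n, φ F = φ F' ↔ SameBOrbit F.1 F'.1) ∧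
    Nat.card {S : Set (CompleteFlag k n) |
      ∃ F : CompleteFlag k n, S = {F' | SameBOrbit F.1 F'.1}} = Nat.factorial n := by
  exact ⟨fun F F' hF hF' => main_iff F F' hF hF',
    ⟨phi, phi_surjective, phi_eq_iff⟩, card_orbits⟩
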